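/- For every positive natural number n and every integer m, m is regular modulo n if and only if gcd(m^2, n) divides m. -/

import Mathlib

/-- An integer `m` is regular modulo `n` if `m^2 * x ≡ m (mod n)` for some integer `x`. -/
def IsRegularMod (n : ℕ) (m : ℤ) : Prop := ∃ x : ℤ, m ^ 2 * x ≡ m [ZMOD (n : ℤ)]

theorem isRegularMod_iff_gcd_sq_dvd (n : ℕ) (hn : 0 < n) (m : ℤ) :
    IsRegularMod n m ↔ (Int.gcd (m ^ 2) (n : ℤ) : ℤ) ∣ m := by
  constructor
  · rintro ⟨x, hx⟩
    obtain ⟨k, hk⟩ := Int.ModEq.dvd hx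
    have h1 : (Int.gcd (m ^ 2) (n : ℤ) : ℤ) ∣ m ^ 2 * x :=
      Dvd.dvd.mul_right (Int.gcd_dvd_left (m ^ 2) (n : ℤ)) x
    have h2 : (Int.gcd (m ^ 2) (n : ℤ) : ℤ) ∣ m - m ^ 2 * x := by
      rw [hk]; exact Dvd.dvd.mul_right (Int.gcd_dvd_right (m ^ 2) (n : ℤ)) k
    simpa using dvd_add h2 h1
  · rintro ⟨c, hc⟩
    refine ⟨Int.gcdA (m ^ 2) n * c, ?_⟩
    have key : m = m ^ 2 * (Int.gcdA (m ^ 2) n * c) + n * (Int.gcdB (m ^ 2) n * c) := by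
      calc m = (Int.gcd (m ^ 2) (n : ℤ) : ℤ) * c := hc
        _ = _ := by rw [Int.gcd_eq_gcd_ab (m ^ 2) (n : ℤ)]; ring
    exact Int.modEq_iff_dvd.mpr ⟨Int.gcdB (m ^ 2) n * c, by linarith⟩
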